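/- arXiv:1902.03757 — 2 statements merged into one kernel-verified Lean document; each statement's English description precedes it below -/
import Mathlib

section
/- Let G be a connected topological group acting continuously on the circle S^1. Then either the action is transitive, or there exists a point of S^1 fixed by every element of G. -/
open Real Set

open Real Set

noncomputable def cmin : Circle := Circle.exp π

lemma cmin_coe : (cmin : ℂ) = -1 := by
  rw [cmin, Circle.coe_exp, Complex.exp_pi_mul_I]

/-- the chart: argument of `-z/p`, as a map `Circle → ℝ`, injective, continuous off `p`. -/
noncomputable def hmap (p z : Circle) : ℝ := Complex.arg ((cmin * z / p : Circle) : ℂ)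

lemma hmap_inj (p : Circle) : Function.Injective (hmap p) := by
  intro z w h
  have h2 : cmin * z / p = cmin * w / p := Circle.injective_arg h
  simp only [div_left_inj, mul_right_inj] at h2
  exact h2

lemma hmap_self (p : Circle) : hmap p p = π := by
  have h2 : cmin * p / p = cmin := mul_div_cancel_right _ _
  rw [hmap, h2, cmin, Circle.arg_exp (by linarith [pi_pos]) le_rfl]

lemma hmap_eq_pi {p z : Circle} (h : hmap p z = π) : z = p := by
  exact hmap_inj p (h.trans (hmap_self p).symm)

lemma hmap_lt_pi {p z : Circle} (h : z ≠ p) : hmap p z < π :=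
  lt_of_le_of_ne (Complex.arg_le_pi _) (fun h' => h (hmap_eq_pi h'))

lemma hmap_gt {p z : Circle} : -π < hmap p z := Complex.neg_pi_lt_arg _

lemma hmap_val (p : Circle) {s : ℝ} (h1 : -π < s) (h2 : s ≤ π) :
    hmap p (p * cmin⁻¹ * Circle.exp s) = s := by
  have h3 : cmin * (p * cmin⁻¹ * Circle.exp s) / p = Circle.exp s := by
    simp [div_eq_mul_inv, mul_comm, mul_left_comm, mul_assoc]
  rw [hmap, h3, Circle.arg_exp h1 h2]

lemma hmap_contOn (p : Circle) : ContinuousOn (hmap p) {p}ᶜ := by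
  intro z hz
  have hc : ContinuousAt (fun z : Circle => ((cmin * z / p : Circle) : ℂ)) z := by fun_prop
  have harg : ContinuousAt Complex.arg ((cmin * z / p : Circle) : ℂ) := by
    apply Complex.continuousAt_arg
    rw [Complex.mem_slitPlane_iff_arg]
    refine ⟨fun h' => hz (hmap_eq_pi h'), Circle.coe_ne_zero _⟩
  have : ContinuousAt (fun z : Circle => Complex.arg ((cmin * z / p : Circle) : ℂ)) z :=
    ContinuousAt.comp (f := fun z : Circle => ((cmin * z / p : Circle) : ℂ)) (x := z) harg hc
  exact this.continuousWithinAt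

lemma closure_ne_univ_of_avoid (O : Set Circle) (p : Circle) {U : Set ℝ} (hU : IsOpen U)
    (hsub : ∀ z ∈ O, hmap p z ∉ U) {s : ℝ} (hs : s ∈ U) (h1 : -π < s) (h2 : s < π) :
    closure O ≠ univ := by
  set w := p * cmin⁻¹ * Circle.exp s with hw
  have hws : hmap p w = s := hmap_val p h1 h2.le
  set V : Set Circle := {p}ᶜ ∩ hmap p ⁻¹' U with hV
  have hVopen : IsOpen V :=
    (hmap_contOn p).isOpen_inter_preimage isOpen_compl_singleton hU
  have hwV : w ∈ V := by
    refine ⟨fun hwp => ?_, by simp [mem_preimage, hws, hs]⟩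
    rw [mem_singleton_iff] at hwp
    rw [hwp, hmap_self] at hws
    exact absurd hws.symm (ne_of_lt h2)
  have hdisj : O ⊆ Vᶜ := fun z hz hzV => hsub z hz hzV.2
  have : closure O ⊆ Vᶜ := closure_minimal hdisj (hVopen.isClosed_compl)
  intro hcl
  exact (this (hcl ▸ mem_univ w)) hwV

lemma closure_ne_univ_of_two (O : Set Circle) (hO : IsPreconnected O) (p q : Circle)
    (hp : p ∉ O) (hq : q ∉ O) (hpq : q ≠ p) : closure O ≠ univ := by
  set t := hmap p q with ht
  have ht1 : -π < t := hmap_gt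
  have ht2 : t < π := hmap_lt_pi hpq
  have hIm : IsPreconnected (hmap p '' O) :=
    hO.image _ ((hmap_contOn p).mono (fun z hz (h : z = p) => hp (h ▸ hz)))
  have htni : t ∉ hmap p '' O := by
    rintro ⟨z, hz, hzt⟩
    exact hq (hmap_inj p hzt ▸ hz)
  have hOC := hIm.ordConnected
  by_cases hcase : ∃ v ∈ hmap p '' O, t < v
  · obtain ⟨v, hv, htv⟩ := hcase
    refine closure_ne_univ_of_avoid O p isOpen_Iio (fun z hz hlt => ?_)
      (show (-π + t)/2 ∈ Iio t by simp only [mem_Iio]; linarith)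
      (by linarith) (by linarith)
    have : t ∈ hmap p '' O := hOC.out ⟨z, hz, rfl⟩ hv ⟨hlt.le, htv.le⟩
    exact htni this
  · push_neg at hcase
    refine closure_ne_univ_of_avoid O p isOpen_Ioi (fun z hz hlt => ?_)
      (show (t + π)/2 ∈ Ioi t by simp only [mem_Ioi]; linarith)
      (by linarith) (by linarith)
    have hle := hcase _ ⟨z, hz, rfl⟩
    exact absurd hle (not_le.mpr hlt)

/-- A connected topological group acting continuously on the circle S¹ either acts
transitively or has a common fixed point. -/
theorem stmt0 {G : Type*} [TopologicalSpace G] [Group G] [IsTopologicalGroup G]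
    [ConnectedSpace G]
    (φ : G → Circle → Circle)
    (hcont : Continuous fun p : G × Circle => φ p.1 p.2)
    (hone : ∀ x, φ 1 x = x)
    (hmul : ∀ g h x, φ (g * h) x = φ g (φ h x)) :
    (∀ x y : Circle, ∃ g : G, φ g x = y) ∨ (∃ x : Circle, ∀ g : G, φ g x = x) := by
  by_cases htrans : ∀ x y : Circle, ∃ g : G, φ g x = y
  · exact Or.inl htrans
  right
  push_neg at htrans
  obtain ⟨x, y₀, hy₀⟩ := htrans
  have hφc : ∀ g : G, Continuous (φ g) := fun g =>
    hcont.comp (continuous_const.prodMk continuous_id)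
  set O : Set Circle := range (fun g => φ g x) with hOdef
  have hxO : x ∈ O := ⟨1, hone x⟩
  have hy₀O : y₀ ∉ O := by rintro ⟨g, hg⟩; exact hy₀ g hg
  have hOinv : ∀ g : G, ∀ z ∈ O, φ g z ∈ O := by
    rintro g z ⟨h, rfl⟩; exact ⟨g * h, hmul g h x⟩
  have hOconn : IsPreconnected O :=
    isPreconnected_range (hcont.comp (continuous_id.prodMk continuous_const))
  have hφinv : ∀ (g : G) z, φ g⁻¹ (φ g z) = z := fun g z => by
    rw [← hmul, inv_mul_cancel, hone]
  have hφinv' : ∀ (g : G) z, φ g (φ g⁻¹ z) = z := fun g z => by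
    rw [← hmul, mul_inv_cancel, hone]
  set K : Set Circle := closure O with hKdef
  have hKconn : IsPreconnected K := hOconn.closure
  have hKcomp : IsCompact K := isClosed_closure.isCompact
  have hOK : O ⊆ K := subset_closure
  have hKinv : ∀ g : G, ∀ z ∈ K, φ g z ∈ K := by
    intro g z hz
    have h1 : φ g '' closure O ⊆ closure (φ g '' O) :=
      image_closure_subset_closure_image (hφc g)
    have h2 : φ g '' O ⊆ O := by rintro _ ⟨w, hw, rfl⟩; exact hOinv g w hw
    exact closure_mono h2 (h1 ⟨z, hz, rfl⟩)
  by_cases hKuniv : K = univ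
  · -- the orbit is dense: its complement is exactly {y₀}, which is then fixed
    refine ⟨y₀, fun g => ?_⟩
    have hOc : ∀ z, z ∉ O → z = y₀ := by
      intro z hz
      by_contra hne
      exact closure_ne_univ_of_two O hOconn y₀ z hy₀O hz hne hKuniv
    by_contra hne
    have hzO : φ g y₀ ∈ O := by
      by_contra h
      exact hne (hOc _ h)
    obtain ⟨h, hh⟩ := hzO
    have hh' : φ h x = φ g y₀ := hh
    apply hy₀ (g⁻¹ * h)
    rw [hmul, hh', hφinv]
  · -- the closure of the orbit is a proper compact connected invariant set
    obtain ⟨q, hq⟩ : ∃ q, q ∉ K := by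
      by_contra h
      push_neg at h
      exact hKuniv (eq_univ_of_forall h)
    have hKq : ∀ z ∈ K, z ≠ q := fun z hz hzq => hq (hzq ▸ hz)
    have hKsub : K ⊆ ({q}ᶜ : Set Circle) := fun z hz => hKq z hz
    have hcOn : ContinuousOn (hmap q) K := (hmap_contOn q).mono hKsub
    set J : Set ℝ := hmap q '' K with hJdef
    have hJcomp : IsCompact J := hKcomp.image_of_continuousOn hcOn
    have hJconn : IsPreconnected J := hKconn.image _ hcOn
    have hJne : J.Nonempty := ⟨_, mem_image_of_mem _ (hOK hxO)⟩
    set a : ℝ := sInf J with hadef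
    set b : ℝ := sSup J with hbdef
    have haJ : a ∈ J := hJcomp.sInf_mem hJne
    have hbJ : b ∈ J := hJcomp.sSup_mem hJne
    have hJIcc : J = Icc a b := by
      apply subset_antisymm
      · exact fun t ht => ⟨csInf_le hJcomp.bddBelow ht, le_csSup hJcomp.bddAbove ht⟩
      · exact hJconn.ordConnected.out haJ hbJ
    obtain ⟨A, hAK, hA⟩ := haJ
    have hmemJ : ∀ z ∈ K, hmap q z ∈ Icc a b := fun z hz => hJIcc ▸ mem_image_of_mem _ hz
    by_cases hab : a = b
    · -- K is a single point: x itself is fixed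
      refine ⟨x, fun g => ?_⟩
      have hsingle : ∀ z ∈ K, z = A := by
        intro z hz
        apply hmap_inj q
        have h1 := hmemJ z hz
        rw [← hab] at h1
        rw [hA]
        exact le_antisymm h1.2 h1.1
      rw [hsingle _ (hOK (hOinv g x hxO)), hsingle x (hOK hxO)]
    · have hab' : a < b := lt_of_le_of_ne (csInf_le_csSup hJne hJcomp.bddBelow hJcomp.bddAbove) hab
      obtain ⟨B, hBK, hB⟩ := hbJ
      -- homeomorphism from K to [a, b]
      haveI : CompactSpace K := isCompact_iff_compactSpace.mp hKcomp
      have hbij : Function.Bijective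
          (fun z : K => (⟨hmap q z.1, hmemJ z.1 z.2⟩ : Icc a b)) := by
        constructor
        · intro z w h
          exact Subtype.ext (hmap_inj q (congrArg Subtype.val h))
        · rintro ⟨t, ht⟩
          obtain ⟨z, hzK, hzt⟩ := (hJIcc ▸ ht : t ∈ J)
          exact ⟨⟨z, hzK⟩, Subtype.ext hzt⟩
      have hce : Continuous (fun z : K => (⟨hmap q z.1, hmemJ z.1 z.2⟩ : Icc a b)) :=
        Continuous.subtype_mk (continuousOn_iff_continuous_restrict.mp hcOn) _
      let e : K ≃ₜ Icc a b :=
        Continuous.homeoOfEquivCompactToT2 (f := Equiv.ofBijective _ hbij) hce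
      set Ainv : ℝ → Circle :=
        fun t => if h : t ∈ Icc a b then ((e.symm ⟨t, h⟩ : K) : Circle) else x with hAinv
      have hAinvK : ∀ t (h : t ∈ Icc a b), Ainv t ∈ K := by
        intro t h; rw [hAinv]; simp only [dif_pos h]; exact (e.symm ⟨t, h⟩).2
      have hAinvmap : ∀ t (h : t ∈ Icc a b), hmap q (Ainv t) = t := by
        intro t h
        rw [hAinv]; simp only [dif_pos h]
        have h1 : e (e.symm ⟨t, h⟩) = ⟨t, h⟩ := e.apply_symm_apply _
        exact congrArg Subtype.val h1
      have hAinvcont : ContinuousOn Ainv (Icc a b) := by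
        rw [continuousOn_iff_continuous_restrict]
        have : (Icc a b).domRestrict Ainv = fun t : Icc a b => ((e.symm t : K) : Circle) := by
          funext t
          simp only [domRestrict, hAinv, dif_pos t.2]
        rw [this]
        exact continuous_subtype_val.comp e.symm.continuous
      -- the endpoint A is mapped to {a, b} in chart coordinates by every g
      have hAa : hmap q A = a := hA
      have claim : ∀ g : G, hmap q (φ g A) = a ∨ hmap q (φ g A) = b := by
        intro g
        set c := hmap q (φ g A) with hc
        have hcJ : c ∈ Icc a b := hmemJ _ (hKinv g A hAK)
        by_contra hcon
        push_neg at hcon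
        have hca : a < c := lt_of_le_of_ne hcJ.1 (Ne.symm hcon.1)
        have hcb : c < b := lt_of_le_of_ne hcJ.2 hcon.2
        set T := φ g⁻¹ A with hT
        set S := φ g⁻¹ B with hS
        have hTK : T ∈ K := hKinv _ _ hAK
        have hSK : S ∈ K := hKinv _ _ hBK
        set t₀ := hmap q T with ht₀
        set s₀ := hmap q S with hs₀
        have ht₀m : t₀ ∈ Icc a b := hmemJ _ hTK
        have hs₀m : s₀ ∈ Icc a b := hmemJ _ hSK
        set F : ℝ → ℝ := fun t => hmap q (φ g (Ainv t)) with hF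
        have hFcont : ContinuousOn F (Icc a b) := by
          apply ContinuousOn.comp (hmap_contOn q)
            (((hφc g).comp_continuousOn hAinvcont))
          intro t ht
          exact hKsub (hKinv g _ (hAinvK t ht))
        have hFt₀ : F t₀ = a := by
          have h1 : Ainv t₀ = T := hmap_inj q ((hAinvmap t₀ ht₀m).trans rfl)
          rw [hF]; simp only [h1, hT, hφinv']; linarith [hA]
        have hFs₀ : F s₀ = b := by
          have h1 : Ainv s₀ = S := hmap_inj q ((hAinvmap s₀ hs₀m).trans rfl)
          rw [hF]; simp only [h1, hS, hφinv']; linarith [hB]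
        have ht₀a : a < t₀ := by
          rcases lt_or_eq_of_le ht₀m.1 with h | h
          · exact h
          · exfalso
            have : T = A := hmap_inj q (by rw [← ht₀, ← h, hA])
            rw [hT] at this
            have : φ g (φ g⁻¹ A) = φ g A := congrArg (φ g) this
            rw [hφinv'] at this
            rw [hc, ← this] at hca
            exact lt_irrefl _ (hA ▸ hca)
        have hs₀a : a < s₀ := by
          rcases lt_or_eq_of_le hs₀m.1 with h | h
          · exact h
          · exfalso
            have : S = A := hmap_inj q (by rw [← hs₀, ← h, hA])
            rw [hS] at this
            have : φ g (φ g⁻¹ B) = φ g A := congrArg (φ g) this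
            rw [hφinv'] at this
            rw [hc, ← this] at hcb
            exact lt_irrefl _ (hB ▸ hcb)
        have huIcc : uIcc t₀ s₀ ⊆ Icc a b := uIcc_subset_Icc ht₀m hs₀m
        have hIVT := intermediate_value_uIcc (hFcont.mono huIcc)
        have hcmem : c ∈ uIcc (F t₀) (F s₀) := by
          rw [hFt₀, hFs₀, uIcc_of_le hab'.le]
          exact ⟨hca.le, hcb.le⟩
        obtain ⟨u, hu, hFu⟩ := hIVT hcmem
        have huab : u ∈ Icc a b := huIcc hu
        have h1 : φ g (Ainv u) = φ g A := hmap_inj q (hFu.trans hc)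
        have h2 : Ainv u = A := by
          have := congrArg (φ g⁻¹) h1
          rwa [hφinv, hφinv] at this
        have h3 : u = a := by
          rw [← hAinvmap u huab, h2, hA]
        rcases mem_uIcc.mp hu with ⟨h6, _⟩ | ⟨h6, _⟩ <;> rw [h3] at h6 <;> linarith
      -- conclude: the map g ↦ hmap q (φ g A) is continuous into {a,b}, constant = a
      refine ⟨A, fun g => ?_⟩
      set cf : G → ℝ := fun g => hmap q (φ g A) with hcf
      have hcfc : Continuous cf := by
        apply ContinuousOn.comp_continuous (hmap_contOn q)
          (hcont.comp (continuous_id.prodMk continuous_const))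
        intro g
        exact hKsub (hKinv g A hAK)
      have hrange : IsPreconnected (range cf) := isPreconnected_range hcfc
      have hnotb : ∀ g : G, cf g ≠ b := by
        intro g' hgb
        have h1r : cf 1 = a := by
          show hmap q (φ 1 A) = a
          rw [hone]; exact hAa
        have hmid : (a + b) / 2 ∈ range cf :=
          hrange.ordConnected.out ⟨1, h1r⟩ ⟨g', hgb⟩ ⟨by linarith, by linarith⟩
        obtain ⟨g'', hg''⟩ := hmid
        have hg2 : hmap q (φ g'' A) = (a + b) / 2 := hg''
        rcases claim g'' with h | h <;> rw [h] at hg2 <;> linarith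
      have : cf g = a := (claim g).resolve_right (hnotb g)
      exact hmap_inj q (this.trans hAa.symm)
end

section
/- Let g: ℝ^d → M be given by g(t₁,…,t_d) = φ_d^{t_d} ∘ ⋯ ∘ φ_1^{t_1}(q₀), where φ_i denotes the flow of a complete smooth vector field X_i on a smooth d-manifold M, and suppose g is a local diffeomorphism at (τ₁,…,τ_d). Set q₁ = g(τ₁,…,τ_d). Then h: ℝ^d → M given by h(t₁,…,t_d) = φ_1^{−t₁} ∘ ⋯ ∘ φ_d^{−t_d}(q₁) is also a local diffeomorphism at (τ₁,…,τ_d). -/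
open scoped Manifold
open Set Function Filter

set_option linter.unusedSectionVars false


section Helpers

variable {𝕜 : Type*} [NontriviallyNormedField 𝕜]
  {E : Type*} [NormedAddCommGroup E] [NormedSpace 𝕜 E]
  {F : Type*} [NormedAddCommGroup F] [NormedSpace 𝕜 F]
  {G : Type*} [NormedAddCommGroup G] [NormedSpace 𝕜 G]
  {H : Type*} [TopologicalSpace H]
  {H' : Type*} [TopologicalSpace H']
  {H'' : Type*} [TopologicalSpace H'']
  {I : ModelWithCorners 𝕜 E H} {J : ModelWithCorners 𝕜 F H'} {K : ModelWithCorners 𝕜 G H''}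
  {M : Type*} [TopologicalSpace M] [ChartedSpace H M]
  {N : Type*} [TopologicalSpace N] [ChartedSpace H' N]
  {P : Type*} [TopologicalSpace P] [ChartedSpace H'' P]
  {n : ℕ∞}

/-- Composition of local diffeomorphisms. -/
theorem IsLocalDiffeomorphAt.comp'' {f : M → N} {g : N → P} {x : M}
    (hg : IsLocalDiffeomorphAt J K n g (f x)) (hf : IsLocalDiffeomorphAt I J n f x) :
    IsLocalDiffeomorphAt I K n (g ∘ f) x := by
  obtain ⟨Φ, hxΦ, hfΦ⟩ := hf
  obtain ⟨Ξ, hxΞ, hgΞ⟩ := hg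
  set T := Φ.toOpenPartialHomeomorph.trans Ξ.toOpenPartialHomeomorph with hT
  have hTs : T.source = Φ.source ∩ ⇑Φ ⁻¹' Ξ.source := OpenPartialHomeomorph.trans_source _ _
  have hTt : T.target = Ξ.target ∩ ⇑(Ξ.toOpenPartialHomeomorph.symm) ⁻¹' Φ.target :=
    OpenPartialHomeomorph.trans_target _ _
  refine ⟨⟨T.toPartialEquiv, T.open_source, T.open_target, ?_, ?_⟩, ?_, ?_⟩
  · have : ContMDiffOn I K n (⇑Ξ ∘ ⇑Φ) T.source := by
      apply Ξ.contMDiffOn_toFun.comp (Φ.contMDiffOn_toFun.mono (by rw [hTs]; exact inter_subset_left))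
      rw [hTs]; exact inter_subset_right
    exact this
  · have : ContMDiffOn K I n (Φ.invFun ∘ Ξ.invFun) T.target := by
      apply Φ.contMDiffOn_invFun.comp (Ξ.contMDiffOn_invFun.mono (by rw [hTt]; exact inter_subset_left))
      rw [hTt]; exact inter_subset_right
    exact this
  · rw [show T.toPartialEquiv.source = T.source from rfl, hTs]
    exact ⟨hxΦ, by simpa [← hfΦ hxΦ] using hxΞ⟩
  · intro y hy
    rw [show T.toPartialEquiv.source = T.source from rfl, hTs] at hy
    have h1 : f y = Φ y := hfΦ hy.1
    have h2 : g (Φ y) = Ξ (Φ y) := hgΞ hy.2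
    show g (f y) = Ξ (Φ y)
    rw [h1, h2]

theorem IsLocalDiffeomorphAt.congr_nhds' {f g : M → N} {x : M}
    (hg : IsLocalDiffeomorphAt I J n g x) (hfg : f =ᶠ[nhds x] g) :
    IsLocalDiffeomorphAt I J n f x := by
  obtain ⟨Φ, hx, hΦ⟩ := hg
  obtain ⟨U, hUsub, hUopen, hxU⟩ := mem_nhds_iff.1 hfg
  refine ⟨⟨(Φ.toOpenPartialHomeomorph.restrOpen U hUopen).toPartialEquiv,
    (Φ.toOpenPartialHomeomorph.restrOpen U hUopen).open_source,
    (Φ.toOpenPartialHomeomorph.restrOpen U hUopen).open_target, ?_, ?_⟩, ⟨hx, hxU⟩, ?_⟩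
  · exact Φ.contMDiffOn_toFun.mono inter_subset_left
  · exact Φ.contMDiffOn_invFun.mono inter_subset_left
  · intro y hy
    have : f y = g y := hUsub hy.2
    rw [this]
    exact hΦ hy.1

variable [IsManifold I (⊤ : ℕ∞) M]

theorem isLocalDiffeomorphAt_chartAt {x₀ x : M} (hx : x ∈ (chartAt H x₀).source) :
    IsLocalDiffeomorphAt I I (⊤ : ℕ∞) (chartAt H x₀) x :=
  ⟨⟨(chartAt H x₀).toPartialEquiv, (chartAt H x₀).open_source, (chartAt H x₀).open_target,
    contMDiffOn_chart, contMDiffOn_chart_symm⟩, hx, fun _ _ => rfl⟩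

theorem isLocalDiffeomorphAt_chartAt_symm {x₀ : M} {y : H} (hy : y ∈ (chartAt H x₀).target) :
    IsLocalDiffeomorphAt I I (⊤ : ℕ∞) (chartAt H x₀).symm y :=
  ⟨⟨(chartAt H x₀).symm.toPartialEquiv, (chartAt H x₀).symm.open_source,
    (chartAt H x₀).symm.open_target, contMDiffOn_chart_symm, contMDiffOn_chart⟩, hy, fun _ _ => rfl⟩

end Helpers

section Vector

variable {𝕜 : Type*} [RCLike 𝕜]
  {E : Type*} [NormedAddCommGroup E] [NormedSpace 𝕜 E]
  {F : Type*} [NormedAddCommGroup F] [NormedSpace 𝕜 F]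

/-- A local diffeomorphism between vector spaces has invertible derivative. -/
theorem IsLocalDiffeomorphAt.hasFDerivAt_equiv' {f : E → F} {x : E}
    (hf : IsLocalDiffeomorphAt 𝓘(𝕜, E) 𝓘(𝕜, F) (⊤ : ℕ∞) f x) :
    ∃ f' : E ≃L[𝕜] F, HasFDerivAt f (f' : E →L[𝕜] F) x := by
  obtain ⟨Φ, hx, hΦ⟩ := hf
  have hfx : f x = Φ x := hΦ hx
  have hfc : ContDiffAt 𝕜 (⊤:ℕ∞) f x :=
    ((Φ.contMDiffOn_toFun.congr hΦ).contMDiffAt (Φ.open_source.mem_nhds hx)).contDiffAt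
  have hΦxt : Φ x ∈ Φ.target := Φ.map_source' hx
  have hsc : ContDiffAt 𝕜 (⊤:ℕ∞) Φ.invFun (f x) := by
    rw [hfx]
    exact (Φ.contMDiffOn_invFun.contMDiffAt (Φ.open_target.mem_nhds hΦxt)).contDiffAt
  set u := fderiv 𝕜 f x with hu
  set v := fderiv 𝕜 Φ.invFun (f x) with hv
  have hud : DifferentiableAt 𝕜 f x := hfc.differentiableAt (by simp)
  have hvd : DifferentiableAt 𝕜 Φ.invFun (f x) := hsc.differentiableAt (by simp)
  have hleft : (Φ.invFun ∘ f) =ᶠ[nhds x] id := by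
    filter_upwards [Φ.open_source.mem_nhds hx] with y hy
    show Φ.invFun (f y) = y
    rw [hΦ hy]
    exact Φ.left_inv' hy
  have hright : (f ∘ Φ.invFun) =ᶠ[nhds (f x)] id := by
    rw [hfx]
    filter_upwards [Φ.open_target.mem_nhds hΦxt] with z hz
    show f (Φ.invFun z) = z
    rw [hΦ (Φ.map_target' hz)]
    exact Φ.right_inv' hz
  have hvu : v.comp u = ContinuousLinearMap.id 𝕜 E := by
    have h1 : fderiv 𝕜 (Φ.invFun ∘ f) x = v.comp u := fderiv_comp x hvd hud
    rw [← h1, hleft.fderiv_eq, fderiv_id]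
  have hΦifx : Φ.invFun (f x) = x := by rw [hfx]; exact Φ.left_inv' hx
  have huv : u.comp v = ContinuousLinearMap.id 𝕜 F := by
    have hud' : DifferentiableAt 𝕜 f (Φ.invFun (f x)) := by rwa [hΦifx]
    have h1 : fderiv 𝕜 (f ∘ Φ.invFun) (f x) = (fderiv 𝕜 f (Φ.invFun (f x))).comp v :=
      fderiv_comp (f x) hud' hvd
    rw [hΦifx] at h1
    rw [← h1, hright.fderiv_eq, fderiv_id]
  refine ⟨{ toFun := u, invFun := v,
            map_add' := u.map_add, map_smul' := u.map_smul,
            left_inv := fun y => ?_, right_inv := fun z => ?_,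
            continuous_toFun := u.cont, continuous_invFun := v.cont }, ?_⟩
  · exact DFunLike.congr_fun hvu y
  · exact DFunLike.congr_fun huv z
  · exact hud.hasFDerivAt

variable [CompleteSpace E]

/-- Inverse function theorem, local diffeomorphism form. -/
theorem isLocalDiffeomorphAt_of_hasFDerivAt {f : E → F} {x : E} {U : Set E}
    (hU : IsOpen U) (hxU : x ∈ U) (hf : ContDiffOn 𝕜 (⊤:ℕ∞) f U) (f' : E ≃L[𝕜] F)
    (hf' : HasFDerivAt f (f' : E →L[𝕜] F) x) :
    IsLocalDiffeomorphAt 𝓘(𝕜, E) 𝓘(𝕜, F) (⊤ : ℕ∞) f x := by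
  have hfa : ContDiffAt 𝕜 (⊤:ℕ∞) f x := hf.contDiffAt (hU.mem_nhds hxU)
  set P := hfa.toOpenPartialHomeomorph f hf' (by simp) with hP
  have hPcoe : ⇑P = f := hfa.toOpenPartialHomeomorph_coe hf' (by simp)
  have hfderiv : ContinuousOn (fderiv 𝕜 f) U := hf.continuousOn_fderiv_of_isOpen hU (by exact_mod_cast le_top)
  set R : Set (E →L[𝕜] F) := Set.range ((↑) : (E ≃L[𝕜] F) → E →L[𝕜] F) with hR
  have hV : IsOpen (U ∩ fderiv 𝕜 f ⁻¹' R) :=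
    hfderiv.isOpen_inter_preimage hU ContinuousLinearEquiv.isOpen
  set V := U ∩ fderiv 𝕜 f ⁻¹' R with hVdef
  have hxV : x ∈ V := ⟨hxU, ⟨f', hf'.fderiv.symm⟩⟩
  set P' := P.restrOpen V hV with hP'
  have hP'coe : ⇑P' = f := hPcoe
  have hP's : P'.source = P.source ∩ V := rfl
  have hsub : P'.source ⊆ U := fun y hy => hy.2.1
  refine ⟨⟨P'.toPartialEquiv, P'.open_source, P'.open_target, ?_, ?_⟩, ?_, ?_⟩
  · show ContMDiffOn 𝓘(𝕜, E) 𝓘(𝕜, F) (⊤ : ℕ∞) P' P'.source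
    rw [hP'coe]
    exact ((hf.mono hsub)).contMDiffOn
  · show ContMDiffOn 𝓘(𝕜, F) 𝓘(𝕜, E) (⊤ : ℕ∞) P'.symm P'.target
    intro z hz
    have hzP : z ∈ P.target := hz.1
    have hyV : P.symm z ∈ V := hz.2
    obtain ⟨e, he⟩ := hyV.2
    have hyU : P.symm z ∈ U := hyV.1
    have hde : HasFDerivAt f (e : E →L[𝕜] F) (P.symm z) := by
      have := ((hf.differentiableOn (by simp)).differentiableAt (hU.mem_nhds hyU)).hasFDerivAt
      rwa [← he] at this
    have hfy : ContDiffAt 𝕜 (⊤:ℕ∞) f (P.symm z) := hf.contDiffAt (hU.mem_nhds hyU)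
    have hsymm : ContDiffAt 𝕜 (⊤:ℕ∞) P.symm z := by
      apply P.contDiffAt_symm hzP
      · rw [hPcoe]; exact hde
      · rw [hPcoe]; exact hfy
    have : ContMDiffAt 𝓘(𝕜, F) 𝓘(𝕜, E) (⊤ : ℕ∞) P'.symm z := hsymm.contMDiffAt
    exact this.contMDiffWithinAt
  · exact ⟨hfa.mem_toOpenPartialHomeomorph_source hf' (by simp), hxV⟩
  · intro y _
    exact (congrFun hP'coe y).symm

end Vector

open scoped Manifold
open Set Function Filter

section ListLemmas

variable {d : ℕ} {M : Type*} [TopologicalSpace M]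
    [ChartedSpace (EuclideanSpace ℝ (Fin d)) M]
    [IsManifold (𝓡 d) (⊤ : ℕ∞) M]

theorem stmt15_foldl_foldr_cancel (φ : Fin d → ℝ → M → M)
    (hφ0 : ∀ i, φ i 0 = id) (hφadd : ∀ i s t, φ i (s + t) = φ i s ∘ φ i t) :
    ∀ (l : List (Fin d × ℝ)) (q : M),
      l.foldl (fun x p => φ p.1 p.2 x) (l.foldr (fun p x => φ p.1 (-p.2) x) q) = q := by
  intro l
  induction l with
  | nil => intro q; simp
  | cons p l ih =>
      intro q
      simp only [List.foldr_cons, List.foldl_cons]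
      have : φ p.1 p.2 (φ p.1 (-p.2) (l.foldr (fun p x => φ p.1 (-p.2) x) q))
          = l.foldr (fun p x => φ p.1 (-p.2) x) q := by
        have h1 := congrFun (hφadd p.1 p.2 (-p.2)) (l.foldr (fun p x => φ p.1 (-p.2) x) q)
        simp only [comp_apply] at h1
        rw [← h1, add_neg_cancel, hφ0]
        rfl
      rw [this, ih]

theorem stmt15_foldr_foldl_cancel (φ : Fin d → ℝ → M → M)
    (hφ0 : ∀ i, φ i 0 = id) (hφadd : ∀ i s t, φ i (s + t) = φ i s ∘ φ i t) :
    ∀ (l : List (Fin d × ℝ)) (q : M),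
      l.foldr (fun p x => φ p.1 (-p.2) x) (l.foldl (fun x p => φ p.1 p.2 x) q) = q := by
  intro l
  induction l with
  | nil => intro q; simp
  | cons p l ih =>
      intro q
      simp only [List.foldr_cons, List.foldl_cons]
      rw [ih]
      have h1 := congrFun (hφadd p.1 (-p.2) p.2) q
      simp only [comp_apply] at h1
      rw [← h1, neg_add_cancel, hφ0]
      rfl

theorem stmt15_smooth_foldl (φ : Fin d → ℝ → M → M)
    (hφsmooth : ∀ i, ContMDiff ((𝓘(ℝ, ℝ)).prod (𝓡 d)) (𝓡 d) (⊤ : ℕ∞)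
      (fun p : ℝ × M => φ i p.1 p.2)) (l : List (Fin d)) :
    ContMDiff ((𝓡 d).prod (𝓡 d)) (𝓡 d) (⊤ : ℕ∞)
      (fun p : EuclideanSpace ℝ (Fin d) × M =>
        (l.map fun i => (i, p.1 i)).foldl (fun x pr => φ pr.1 pr.2 x) p.2) := by
  induction l with
  | nil => simpa using contMDiff_snd
  | cons i l ih =>
      simp only [List.map_cons, List.foldl_cons]
      have hinner : ContMDiff ((𝓡 d).prod (𝓡 d)) ((𝓡 d).prod (𝓡 d)) (⊤ : ℕ∞)
          (fun p : EuclideanSpace ℝ (Fin d) × M => (p.1, φ i (p.1 i) p.2)) := by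
        apply contMDiff_fst.prodMk
        exact (hφsmooth i).comp
          ((((EuclideanSpace.proj (𝕜 := ℝ) i).contMDiff).comp contMDiff_fst).prodMk contMDiff_snd)
      exact ih.comp hinner

theorem stmt15_smooth_foldr (φ : Fin d → ℝ → M → M)
    (hφsmooth : ∀ i, ContMDiff ((𝓘(ℝ, ℝ)).prod (𝓡 d)) (𝓡 d) (⊤ : ℕ∞)
      (fun p : ℝ × M => φ i p.1 p.2)) (l : List (Fin d)) :
    ContMDiff ((𝓡 d).prod (𝓡 d)) (𝓡 d) (⊤ : ℕ∞)
      (fun p : EuclideanSpace ℝ (Fin d) × M =>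
        (l.map fun i => (i, p.1 i)).foldr (fun pr x => φ pr.1 (-pr.2) x) p.2) := by
  induction l with
  | nil => simpa using contMDiff_snd
  | cons i l ih =>
      simp only [List.map_cons, List.foldr_cons]
      exact (hφsmooth i).comp
        (((((EuclideanSpace.proj (𝕜 := ℝ) i).contMDiff).comp contMDiff_fst).neg).prodMk ih)

end ListLemmas
open Set Function Filter



/-- If `g(t₁,…,t_d) = φ_d^{t_d} ∘ ⋯ ∘ φ_1^{t_1}(q₀)` is a local diffeomorphism at
`(τ₁,…,τ_d)` with `q₁ = g(τ₁,…,τ_d)`, then the reverse composition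
`h(t₁,…,t_d) = φ_1^{-t₁} ∘ ⋯ ∘ φ_d^{-t_d}(q₁)` is also a local diffeomorphism there. -/
theorem stmt15 {d : ℕ} {M : Type*} [TopologicalSpace M]
    [ChartedSpace (EuclideanSpace ℝ (Fin d)) M]
    [IsManifold (𝓡 d) (⊤ : ℕ∞) M]
    (φ : Fin d → ℝ → M → M)
    (hφ0 : ∀ i, φ i 0 = id)
    (hφadd : ∀ i s t, φ i (s + t) = φ i s ∘ φ i t)
    (hφsmooth : ∀ i, ContMDiff ((𝓘(ℝ, ℝ)).prod (𝓡 d)) (𝓡 d) (⊤ : ℕ∞)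
      (fun p : ℝ × M => φ i p.1 p.2))
    (q₀ : M) (τv : EuclideanSpace ℝ (Fin d))
    (g : EuclideanSpace ℝ (Fin d) → M)
    (hg : ∀ t, g t = (List.ofFn fun i : Fin d => (i, t i)).foldl
      (fun x p => φ p.1 p.2 x) q₀)
    (q₁ : M) (hq₁ : q₁ = g τv)
    (h : EuclideanSpace ℝ (Fin d) → M)
    (hh : ∀ t, h t = (List.ofFn fun i : Fin d => (i, t i)).foldr
      (fun p x => φ p.1 (-p.2) x) q₁)
    (hgdiffeo : IsLocalDiffeomorphAt (𝓡 d) (𝓡 d) (⊤ : ℕ∞) g τv) :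
    IsLocalDiffeomorphAt (𝓡 d) (𝓡 d) (⊤ : ℕ∞) h τv := by

  set F : EuclideanSpace ℝ (Fin d) × M → M := fun p =>
    ((List.finRange d).map fun i => (i, p.1 i)).foldl (fun x pr => φ pr.1 pr.2 x) p.2 with hFdef
  set G : EuclideanSpace ℝ (Fin d) × M → M := fun p =>
    ((List.finRange d).map fun i => (i, p.1 i)).foldr (fun pr x => φ pr.1 (-pr.2) x) p.2 with hGdef
  have hgF : ∀ t, g t = F (t, q₀) := by
    intro t; rw [hg t, hFdef]; simp [List.ofFn_eq_map]
  have hhG : ∀ t, h t = G (t, q₁) := by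
    intro t; rw [hh t, hGdef]; simp [List.ofFn_eq_map]
  have hFsmooth := stmt15_smooth_foldl φ hφsmooth (List.finRange d)
  have hGsmooth := stmt15_smooth_foldr φ hφsmooth (List.finRange d)
  have hFG : ∀ t q, F (t, G (t, q)) = q := fun t q =>
    stmt15_foldl_foldr_cancel φ hφ0 hφadd _ q
  have hGF : ∀ t q, G (t, F (t, q)) = q := fun t q =>
    stmt15_foldr_foldl_cancel φ hφ0 hφadd _ q
  have hq1F : F (τv, q₀) = q₁ := by rw [← hgF]; exact hq₁.symm
  have hhτ : h τv = q₀ := by rw [hhG, ← hq1F, hGF]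
  have hsm_h : ContMDiff (𝓡 d) (𝓡 d) (⊤ : ℕ∞) h := by
    rw [show h = fun t => G (t, q₁) from funext hhG]
    exact hGsmooth.comp (contMDiff_id.prodMk contMDiff_const)
  set ch := chartAt (EuclideanSpace ℝ (Fin d)) q₀ with hch
  set cg := chartAt (EuclideanSpace ℝ (Fin d)) q₁ with hcg
  set y₀ := ch q₀ with hy₀
  have hy₀t : y₀ ∈ ch.target := ch.map_source (mem_chart_source _ _)
  have hsymm_y₀ : ch.symm y₀ = q₀ := ch.left_inv (mem_chart_source _ _)
  -- the coordinate representation of g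
  set Gc : EuclideanSpace ℝ (Fin d) → EuclideanSpace ℝ (Fin d) := fun t => cg (g t) with hGcdef
  have hGcdiffeo : IsLocalDiffeomorphAt (𝓡 d) (𝓡 d) (⊤ : ℕ∞) Gc τv := by
    have hc : IsLocalDiffeomorphAt (𝓡 d) (𝓡 d) (⊤ : ℕ∞) cg (g τv) := by
      rw [← hq₁]; exact isLocalDiffeomorphAt_chartAt (mem_chart_source _ _)
    exact hc.comp'' hgdiffeo
  obtain ⟨A, hA⟩ := hGcdiffeo.hasFDerivAt_equiv'
  -- the coordinate representation of Ψ = F (τv, ·)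
  set Ψc : EuclideanSpace ℝ (Fin d) → EuclideanSpace ℝ (Fin d) :=
    fun y => cg (F (τv, ch.symm y)) with hΨcdef
  have hΨcdiffeo : IsLocalDiffeomorphAt (𝓡 d) (𝓡 d) (⊤ : ℕ∞) Ψc y₀ := by
    have h1 : IsLocalDiffeomorphAt (𝓡 d) (𝓡 d) (⊤ : ℕ∞) ch.symm y₀ :=
      isLocalDiffeomorphAt_chartAt_symm hy₀t
    have hpair : ContMDiff (𝓡 d) ((𝓡 d).prod (𝓡 d)) (⊤ : ℕ∞)
        (fun q : M => ((τv, q) : EuclideanSpace ℝ (Fin d) × M)) :=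
      contMDiff_const.prodMk contMDiff_id
    have h2 : IsLocalDiffeomorphAt (𝓡 d) (𝓡 d) (⊤ : ℕ∞) (fun q => F (τv, q)) (ch.symm y₀) :=
      ⟨⟨⟨fun q => F (τv, q), fun q => G (τv, q), univ, univ, fun _ _ => mem_univ _,
        fun _ _ => mem_univ _, fun q _ => hGF τv q, fun q _ => hFG τv q⟩,
        isOpen_univ, isOpen_univ,
        (hFsmooth.comp hpair).contMDiffOn,
        (hGsmooth.comp hpair).contMDiffOn⟩,
        mem_univ _, fun _ _ => rfl⟩
    have h3 : IsLocalDiffeomorphAt (𝓡 d) (𝓡 d) (⊤ : ℕ∞) cg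
        ((fun q => F (τv, q)) (ch.symm y₀)) := by
      show IsLocalDiffeomorphAt (𝓡 d) (𝓡 d) (⊤ : ℕ∞) cg (F (τv, ch.symm y₀))
      rw [hsymm_y₀, hq1F]
      exact isLocalDiffeomorphAt_chartAt (mem_chart_source _ _)
    have h21 : IsLocalDiffeomorphAt (𝓡 d) (𝓡 d) (⊤ : ℕ∞)
        ((fun q => F (τv, q)) ∘ ⇑ch.symm) y₀ := h2.comp'' h1
    have h22 : IsLocalDiffeomorphAt (𝓡 d) (𝓡 d) (⊤ : ℕ∞)
        (⇑cg ∘ ((fun q => F (τv, q)) ∘ ⇑ch.symm)) y₀ :=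
      IsLocalDiffeomorphAt.comp'' (f := (fun q => F (τv, q)) ∘ ⇑ch.symm)
        (g := ⇑cg) (x := y₀) h3 h21
    exact h22
  obtain ⟨B, hB⟩ := hΨcdiffeo.hasFDerivAt_equiv'
  -- the two-variable coordinate representation
  set K : EuclideanSpace ℝ (Fin d) × EuclideanSpace ℝ (Fin d) → EuclideanSpace ℝ (Fin d) :=
    fun p => cg (F (p.1, ch.symm p.2)) with hKdef
  have hKm : ContMDiffAt ((𝓡 d).prod (𝓡 d)) (𝓡 d) (⊤ : ℕ∞) K (τv, y₀) := by
    have hinner : ContMDiffAt ((𝓡 d).prod (𝓡 d)) ((𝓡 d).prod (𝓡 d)) (⊤ : ℕ∞)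
        (fun p : EuclideanSpace ℝ (Fin d) × EuclideanSpace ℝ (Fin d) =>
          ((p.1, ch.symm p.2) : EuclideanSpace ℝ (Fin d) × M)) (τv, y₀) := by
      have hcs : ContMDiffAt (𝓡 d) (𝓡 d) (⊤ : ℕ∞) ch.symm y₀ :=
        contMDiffOn_chart_symm.contMDiffAt (ch.open_target.mem_nhds hy₀t)
      have hsnd : ContMDiffAt ((𝓡 d).prod (𝓡 d)) (𝓡 d) (⊤ : ℕ∞)
          (fun p : EuclideanSpace ℝ (Fin d) × EuclideanSpace ℝ (Fin d) => ch.symm p.2)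
          (τv, y₀) :=
        hcs.comp (τv, y₀) contMDiffAt_snd
      exact contMDiffAt_fst.prodMk hsnd
    have h2 : ContMDiffAt ((𝓡 d).prod (𝓡 d)) (𝓡 d) (⊤ : ℕ∞)
        (F ∘ fun p : EuclideanSpace ℝ (Fin d) × EuclideanSpace ℝ (Fin d) =>
          ((p.1, ch.symm p.2) : EuclideanSpace ℝ (Fin d) × M)) (τv, y₀) :=
      hFsmooth.contMDiffAt.comp _ hinner
    have h3 : ContMDiffAt (𝓡 d) (𝓡 d) (⊤ : ℕ∞) cg
        ((F ∘ fun p : EuclideanSpace ℝ (Fin d) × EuclideanSpace ℝ (Fin d) =>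
          ((p.1, ch.symm p.2) : EuclideanSpace ℝ (Fin d) × M)) (τv, y₀)) := by
      show ContMDiffAt (𝓡 d) (𝓡 d) (⊤ : ℕ∞) cg (F (τv, ch.symm y₀))
      rw [hsymm_y₀, hq1F]
      exact contMDiffOn_chart.contMDiffAt (cg.open_source.mem_nhds (mem_chart_source _ _))
    exact h3.comp _ h2
  have hKc : ContDiffAt ℝ (⊤:ℕ∞) K (τv, y₀) := by
    rw [← contMDiffAt_iff_contDiffAt, modelWithCornersSelf_prod, ← chartedSpaceSelf_prod]
    exact hKm
  set DK := fderiv ℝ K (τv, y₀) with hDKdef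
  have hKd : HasFDerivAt K DK (τv, y₀) :=
    (hKc.differentiableAt (by simp)).hasFDerivAt
  have hGcK : Gc = fun t => K (t, y₀) := by
    funext t
    show cg (g t) = cg (F (t, ch.symm y₀))
    rw [hsymm_y₀, ← hgF]
  have hAeq : (A : EuclideanSpace ℝ (Fin d) →L[ℝ] EuclideanSpace ℝ (Fin d))
      = DK.comp (ContinuousLinearMap.inl ℝ _ _) := by
    have h1 : HasFDerivAt (fun t => K (t, y₀))
        (DK.comp (ContinuousLinearMap.inl ℝ _ _)) τv :=
      by have := hKd.comp τv (hasFDerivAt_prodMk_left (𝕜 := ℝ) τv y₀); exact this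
    rw [← hGcK] at h1
    exact hA.unique h1
  have hBeq : (B : EuclideanSpace ℝ (Fin d) →L[ℝ] EuclideanSpace ℝ (Fin d))
      = DK.comp (ContinuousLinearMap.inr ℝ _ _) := by
    have h1 : HasFDerivAt (fun y => K (τv, y))
        (DK.comp (ContinuousLinearMap.inr ℝ _ _)) y₀ :=
      hKd.comp y₀ (hasFDerivAt_prodMk_right (𝕜 := ℝ) τv y₀)
    have h2 : Ψc = fun y => K (τv, y) := rfl
    rw [← h2] at h1
    exact hB.unique h1
  -- the coordinate representation of h
  set Hc : EuclideanSpace ℝ (Fin d) → EuclideanSpace ℝ (Fin d) := fun t => ch (h t) with hHcdef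
  have hUopen : IsOpen (h ⁻¹' ch.source) := ch.open_source.preimage hsm_h.continuous
  have hτU : τv ∈ h ⁻¹' ch.source := by
    show h τv ∈ ch.source
    rw [hhτ]; exact mem_chart_source _ _
  have hHcsm : ContMDiffOn (𝓡 d) (𝓡 d) (⊤ : ℕ∞) Hc (h ⁻¹' ch.source) :=
    contMDiffOn_chart.comp hsm_h.contMDiffOn (fun t ht => ht)
  have hHccd : ContDiffOn ℝ (⊤:ℕ∞) Hc (h ⁻¹' ch.source) := hHcsm.contDiffOn
  have hHcd : HasFDerivAt Hc (fderiv ℝ Hc τv) τv :=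
    ((hHccd.contDiffAt (hUopen.mem_nhds hτU)).differentiableAt
      (by simp)).hasFDerivAt
  have hconst : (fun t => K (t, Hc t)) =ᶠ[nhds τv]
      fun _ => cg q₁ := by
    filter_upwards [hUopen.mem_nhds hτU] with t ht
    show cg (F (t, ch.symm (ch (h t)))) = cg q₁
    rw [ch.left_inv ht, hhG t, hFG]
  have hzero : DK.comp ((ContinuousLinearMap.id ℝ _).prod (fderiv ℝ Hc τv)) = 0 := by
    have h1 : HasFDerivAt (fun t => K (t, Hc t))
        (DK.comp ((ContinuousLinearMap.id ℝ _).prod (fderiv ℝ Hc τv))) τv :=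
      by
        have hKd' : HasFDerivAt K DK (τv, Hc τv) := by
          have hy : Hc τv = y₀ := by show ch (h τv) = ch q₀; rw [hhτ]
          rw [hy]; exact hKd
        exact hKd'.comp τv ((hasFDerivAt_id τv).prodMk hHcd)
    have h2 : HasFDerivAt (fun t => K (t, Hc t)) (0 : _ →L[ℝ] _) τv :=
      (hasFDerivAt_const (cg q₁) τv).congr_of_eventuallyEq hconst
    exact h1.unique h2
  have hBDH : ∀ v, B (fderiv ℝ Hc τv v) = - A v := by
    intro v
    have h0 := DFunLike.congr_fun hzero v
    simp only [ContinuousLinearMap.comp_apply, ContinuousLinearMap.prod_apply,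
      ContinuousLinearMap.id_apply, ContinuousLinearMap.zero_apply] at h0
    have hAv := DFunLike.congr_fun hAeq v
    have hBv := DFunLike.congr_fun hBeq (fderiv ℝ Hc τv v)
    simp only [ContinuousLinearMap.comp_apply, ContinuousLinearMap.inl_apply,
      ContinuousLinearMap.inr_apply, ContinuousLinearEquiv.coe_coe] at hAv hBv
    have hsplit : DK (v, fderiv ℝ Hc τv v) = A v + B (fderiv ℝ Hc τv v) := by
      have hd : ((v, fderiv ℝ Hc τv v) : EuclideanSpace ℝ (Fin d) × EuclideanSpace ℝ (Fin d))
          = (v, 0) + (0, fderiv ℝ Hc τv v) := by simp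
      rw [hd, map_add, hAv, hBv]
    rw [hsplit] at h0
    exact eq_neg_of_add_eq_zero_right h0
  set CLE : EuclideanSpace ℝ (Fin d) ≃L[ℝ] EuclideanSpace ℝ (Fin d) :=
    (A.trans B.symm).trans (ContinuousLinearEquiv.neg ℝ) with hCLEdef
  have hHcEq : HasFDerivAt Hc
      (CLE : EuclideanSpace ℝ (Fin d) →L[ℝ] EuclideanSpace ℝ (Fin d)) τv := by
    have hcoe : (CLE : EuclideanSpace ℝ (Fin d) →L[ℝ] EuclideanSpace ℝ (Fin d))
        = fderiv ℝ Hc τv := by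
      apply ContinuousLinearMap.ext
      intro v
      show -(B.symm (A v)) = fderiv ℝ Hc τv v
      have h1 := hBDH v
      have h2 := congrArg B.symm h1
      rw [B.symm_apply_apply, map_neg] at h2
      exact h2.symm
    rw [hcoe]
    exact hHcd
  have hHcdiffeo : IsLocalDiffeomorphAt (𝓡 d) (𝓡 d) (⊤ : ℕ∞) Hc τv :=
    isLocalDiffeomorphAt_of_hasFDerivAt hUopen hτU hHccd CLE hHcEq
  have hfinal : IsLocalDiffeomorphAt (𝓡 d) (𝓡 d) (⊤ : ℕ∞) (ch.symm ∘ Hc) τv := by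
    have hc : IsLocalDiffeomorphAt (𝓡 d) (𝓡 d) (⊤ : ℕ∞) ch.symm (Hc τv) := by
      have hy : Hc τv = y₀ := by show ch (h τv) = ch q₀; rw [hhτ]
      rw [hy]
      exact isLocalDiffeomorphAt_chartAt_symm hy₀t
    exact hc.comp'' hHcdiffeo
  apply hfinal.congr_nhds'
  filter_upwards [hUopen.mem_nhds hτU] with t ht
  exact (ch.left_inv ht).symm
end
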